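/- Let I_0(t) denote the family of integrals I_λ = ∫_0^∞ f_{k,λ}^α(x) dx for the noncentral chi-squared PDF. For k > 1, α > 0 with k > 2 - 2/α, the map λ ↦ ∫_0^∞ f_{k,λ}^α(x) dx is continuous on (0,∞): for any λ₀ > 0, ∫_0^∞ f_{k,λ}^α(x) dx → ∫_0^∞ f_{k,λ₀}^α(x) dx as λ → λ₀. -/

import Mathlib

open Real MeasureTheory Set Filter

/-- Modified Bessel function of the first kind of order `ν`. -/
noncomputable def besselI (ν x : ℝ) : ℝ :=
  ∑' m : ℕ, (1 / ((m.factorial : ℝ) * Real.Gamma ((m : ℝ) + ν + 1))) *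
    (x / 2) ^ (2 * (m : ℝ) + ν)

/-- PDF of the noncentral chi-squared distribution with `k` degrees of freedom and
noncentrality parameter `lam`, for `x > 0`. -/
noncomputable def ncChiSqPDF (k lam x : ℝ) : ℝ :=
  (1 / 2) * Real.exp (-(x + lam) / 2) * (x / lam) ^ (k / 4 - 1 / 2) *
    besselI (k / 2 - 1) (Real.sqrt (lam * x))

/-- PDF of the central chi-squared distribution with `k` degrees of freedom, for `x > 0`. -/
noncomputable def chiSqPDF (k x : ℝ) : ℝ :=
  x ^ (k / 2 - 1) * Real.exp (-x / 2) / (2 ^ (k / 2) * Real.Gamma (k / 2))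

lemma gamma_fact_ineq {ν : ℝ} (hν : -(1/2 : ℝ) ≤ ν) (m : ℕ) :
    ((2*m).factorial : ℝ) * Real.Gamma (ν+1) ≤ 4^m * m.factorial * Real.Gamma ((m:ℝ) + ν + 1) := by
  induction m with
  | zero => simp
  | succ n ih =>
    have hpos : (0:ℝ) < (n:ℝ) + ν + 1 := by
      have := Nat.cast_nonneg (α := ℝ) n; linarith
    have hΓ : Real.Gamma (((n+1:ℕ):ℝ) + ν + 1) = ((n:ℝ)+ν+1) * Real.Gamma ((n:ℝ)+ν+1) := by
      have : (((n+1:ℕ):ℝ) + ν + 1) = ((n:ℝ)+ν+1) + 1 := by push_cast; ring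
      rw [this, Real.Gamma_add_one hpos.ne']
    have hfac : ((2*(n+1)).factorial : ℝ) = (2*n+2) * ((2*n+1) * (2*n).factorial) := by
      have : 2*(n+1) = (2*n+1)+1 := by ring
      rw [this, Nat.factorial_succ, Nat.factorial_succ]; push_cast; ring
    have hΓn : 0 < Real.Gamma ((n:ℝ)+ν+1) := Real.Gamma_pos_of_pos hpos
    have hfn : (0:ℝ) < n.factorial := by positivity
    have h4 : (0:ℝ) < 4^n := by positivity
    rw [hΓ, hfac]
    have key : ((2*n).factorial : ℝ) * Real.Gamma (ν+1) ≤ 4^n * n.factorial * Real.Gamma ((n:ℝ)+ν+1) := ih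
    have hcast : (0:ℝ) ≤ (n:ℝ) := Nat.cast_nonneg n
    have hfac2 : ((n+1).factorial : ℝ) = ((n:ℝ)+1) * n.factorial := by
      rw [Nat.factorial_succ]; push_cast; ring
    have h2 : (2*(n:ℝ)+2)*(2*(n:ℝ)+1) ≤ 4*((n:ℝ)+1)*((n:ℝ)+ν+1) := by nlinarith
    have h3 := mul_le_mul_of_nonneg_right h2
      (by positivity : (0:ℝ) ≤ 4^n * (n.factorial : ℝ) * Real.Gamma ((n:ℝ)+ν+1))
    have h1 := mul_le_mul_of_nonneg_left key
      (by positivity : (0:ℝ) ≤ (2*(n:ℝ)+2)*(2*(n:ℝ)+1))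
    rw [hfac2, pow_succ]
    nlinarith [h1, h3]

lemma besselI_term_nonneg {ν : ℝ} (hν : -(1/2 : ℝ) ≤ ν) {z : ℝ} (hz : 0 ≤ z) (m : ℕ) :
    0 ≤ (1 / ((m.factorial : ℝ) * Real.Gamma ((m : ℝ) + ν + 1))) * (z / 2) ^ (2 * (m : ℝ) + ν) := by
  have hΓm : 0 < Real.Gamma ((m:ℝ)+ν+1) :=
    Real.Gamma_pos_of_pos (by have := Nat.cast_nonneg (α := ℝ) m; linarith)
  have h1 : (0:ℝ) ≤ (z/2) ^ (2 * (m:ℝ) + ν) := Real.rpow_nonneg (by linarith) _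
  positivity

lemma besselI_term_le {ν : ℝ} (hν : -(1/2 : ℝ) ≤ ν) {z : ℝ} (hz : 0 < z) (m : ℕ) :
    (1 / ((m.factorial : ℝ) * Real.Gamma ((m : ℝ) + ν + 1))) * (z / 2) ^ (2 * (m : ℝ) + ν)
      ≤ (z/2)^ν / Real.Gamma (ν+1) * (z^(2*m) / (2*m).factorial) := by
  have hz2 : 0 < z/2 := by linarith
  have hΓm : 0 < Real.Gamma ((m:ℝ)+ν+1) :=
    Real.Gamma_pos_of_pos (by have := Nat.cast_nonneg (α := ℝ) m; linarith)
  have hΓ : 0 < Real.Gamma (ν+1) := Real.Gamma_pos_of_pos (by linarith)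
  have hrw : (z/2) ^ (2 * (m:ℝ) + ν) = (z/2)^(2*m) * (z/2)^ν := by
    rw [Real.rpow_add hz2, show (2*(m:ℝ)) = ((2*m : ℕ):ℝ) by push_cast; ring,
      Real.rpow_natCast]
  have hzz : z^(2*m) = (z/2)^(2*m) * 4^m := by
    calc z^(2*m) = (z^2)^m := pow_mul z 2 m
      _ = ((z/2)^2*4)^m := by ring_nf
      _ = ((z/2)^2)^m * 4^m := mul_pow _ _ _
      _ = (z/2)^(2*m) * 4^m := by rw [← pow_mul]
  have key : (1:ℝ) / (m.factorial * Real.Gamma ((m:ℝ)+ν+1))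
      ≤ 4^m / ((2*m).factorial * Real.Gamma (ν+1)) := by
    rw [div_le_div_iff₀ (by positivity) (by positivity)]
    have := gamma_fact_ineq hν m
    nlinarith [this]
  have hnn : (0:ℝ) ≤ (z/2)^(2*m) * (z/2)^ν := by
    have := Real.rpow_nonneg hz2.le ν; positivity
  calc (1 / ((m.factorial : ℝ) * Real.Gamma ((m : ℝ) + ν + 1))) * (z / 2) ^ (2 * (m : ℝ) + ν)
      = (1 / ((m.factorial : ℝ) * Real.Gamma ((m : ℝ) + ν + 1))) * ((z/2)^(2*m) * (z/2)^ν) := by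
        rw [hrw]
    _ ≤ (4^m / ((2*m).factorial * Real.Gamma (ν+1))) * ((z/2)^(2*m) * (z/2)^ν) :=
        mul_le_mul_of_nonneg_right key hnn
    _ = (z/2)^ν / Real.Gamma (ν+1) * (((z/2)^(2*m) * 4^m) / (2*m).factorial) := by ring
    _ = (z/2)^ν / Real.Gamma (ν+1) * (z^(2*m) / (2*m).factorial) := by rw [← hzz]

lemma summable_even_exp (r : ℝ) : Summable (fun m : ℕ => r^(2*m) / (2*m).factorial) :=
  (Real.summable_pow_div_factorial r).comp_injective (fun a b h => by omega)

lemma besselI_summable {ν : ℝ} (hν : -(1/2 : ℝ) ≤ ν) {z : ℝ} (hz : 0 < z) :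
    Summable (fun m : ℕ => (1 / ((m.factorial : ℝ) * Real.Gamma ((m : ℝ) + ν + 1))) *
      (z / 2) ^ (2 * (m : ℝ) + ν)) :=
  Summable.of_nonneg_of_le (besselI_term_nonneg hν hz.le) (besselI_term_le hν hz)
    ((summable_even_exp z).mul_left _)

lemma besselI_nonneg {ν : ℝ} (hν : -(1/2 : ℝ) ≤ ν) {z : ℝ} (hz : 0 ≤ z) :
    0 ≤ besselI ν z :=
  tsum_nonneg (besselI_term_nonneg hν hz)

lemma besselI_le_exp {ν : ℝ} (hν : -(1/2 : ℝ) ≤ ν) {z : ℝ} (hz : 0 < z) :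
    besselI ν z ≤ (z/2)^ν / Real.Gamma (ν+1) * Real.exp z := by
  have hΓ : 0 < Real.Gamma (ν+1) := Real.Gamma_pos_of_pos (by linarith)
  have hC : (0:ℝ) ≤ (z/2)^ν / Real.Gamma (ν+1) := by
    have := Real.rpow_nonneg (by linarith : (0:ℝ) ≤ z/2) ν; positivity
  have h1 : besselI ν z ≤ ∑' m : ℕ, (z/2)^ν / Real.Gamma (ν+1) * (z^(2*m) / (2*m).factorial) :=
    Summable.tsum_le_tsum (besselI_term_le hν hz) (besselI_summable hν hz)
      ((summable_even_exp z).mul_left _)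
  have h2 : ∑' m : ℕ, (z/2)^ν / Real.Gamma (ν+1) * (z^(2*m) / (2*m).factorial)
      = (z/2)^ν / Real.Gamma (ν+1) * ∑' m : ℕ, z^(2*m) / (2*m).factorial := tsum_mul_left
  have h3 : ∑' m : ℕ, z^(2*m) / (2*m).factorial ≤ Real.exp z := by
    have he : Real.exp z = ∑' n : ℕ, z^n / n.factorial := by
      rw [Real.exp_eq_exp_ℝ, NormedSpace.exp_eq_tsum_div]
    rw [he]
    exact Summable.tsum_le_tsum_of_inj (fun m => 2*m) (mul_right_injective₀ two_ne_zero)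
      (fun c _ => by positivity) (fun m => le_rfl) (summable_even_exp z)
      (Real.summable_pow_div_factorial z)
  calc besselI ν z ≤ _ := h1
    _ = _ := h2
    _ ≤ (z/2)^ν / Real.Gamma (ν+1) * Real.exp z := mul_le_mul_of_nonneg_left h3 hC

lemma tendsto_besselI_sqrt {ν : ℝ} (hν : -(1/2 : ℝ) ≤ ν) {c t₀ : ℝ} (hc : 0 < c) (ht₀ : 0 < t₀) :
    Tendsto (fun t => besselI ν (Real.sqrt (t * c))) (nhdsWithin t₀ (Ioi 0))
      (nhds (besselI ν (Real.sqrt (t₀ * c)))) := by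
  set d : ℝ := Real.sqrt (2 * t₀ * c) with hd_def
  set e : ℝ := Real.sqrt (t₀ / 2 * c) with he_def
  have hd : 0 < d := Real.sqrt_pos.2 (by positivity)
  have he : 0 < e := Real.sqrt_pos.2 (by positivity)
  have hed : e ≤ d := Real.sqrt_le_sqrt (by nlinarith)
  have hΓ : 0 < Real.Gamma (ν+1) := Real.Gamma_pos_of_pos (by linarith)
  have hB : (0:ℝ) ≤ (e/2)^ν + (d/2)^ν := by
    have h1 := Real.rpow_nonneg (by linarith : (0:ℝ) ≤ e/2) ν
    have h2 := Real.rpow_nonneg (by linarith : (0:ℝ) ≤ d/2) ν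
    linarith
  apply tendsto_tsum_of_dominated_convergence
    (bound := fun m : ℕ => ((e/2)^ν + (d/2)^ν) / Real.Gamma (ν+1) * (d^(2*m) / (2*m).factorial))
  · exact (summable_even_exp d).mul_left _
  · intro m
    have hsq : Tendsto (fun t : ℝ => Real.sqrt (t * c) / 2) (nhdsWithin t₀ (Ioi 0))
        (nhds (Real.sqrt (t₀ * c) / 2)) := by
      apply Tendsto.mono_left _ nhdsWithin_le_nhds
      exact ((Real.continuous_sqrt.comp (continuous_id.mul continuous_const)).div_const 2).tendsto t₀
    have hrp : ContinuousAt (fun y : ℝ => y ^ (2 * (m:ℝ) + ν)) (Real.sqrt (t₀ * c) / 2) := by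
      apply Real.continuousAt_rpow_const
      left
      have : 0 < Real.sqrt (t₀ * c) := Real.sqrt_pos.2 (by positivity)
      positivity
    exact (hrp.tendsto.comp hsq).const_mul _
  · filter_upwards [nhdsWithin_le_nhds (Ioo_mem_nhds (by linarith : t₀/2 < t₀)
      (by linarith : t₀ < 2*t₀))] with t ht m
    have ht0 : 0 < t := lt_trans (by linarith) ht.1
    set z : ℝ := Real.sqrt (t * c) with hz_def
    have hz : 0 < z := Real.sqrt_pos.2 (by positivity)
    have hze : e ≤ z := Real.sqrt_le_sqrt (by nlinarith [ht.1])
    have hzd : z ≤ d := Real.sqrt_le_sqrt (by nlinarith [ht.2])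
    have hnn := besselI_term_nonneg hν hz.le m
    rw [Real.norm_eq_abs, abs_of_nonneg hnn]
    calc (1 / ((m.factorial : ℝ) * Real.Gamma ((m : ℝ) + ν + 1))) * (z / 2) ^ (2 * (m : ℝ) + ν)
        ≤ (z/2)^ν / Real.Gamma (ν+1) * (z^(2*m) / (2*m).factorial) := besselI_term_le hν hz m
      _ ≤ ((e/2)^ν + (d/2)^ν) / Real.Gamma (ν+1) * (d^(2*m) / (2*m).factorial) := by
          have hzB : (z/2)^ν ≤ (e/2)^ν + (d/2)^ν := by
            rcases le_or_gt 0 ν with hν0 | hν0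
            · have := Real.rpow_le_rpow (by linarith : (0:ℝ) ≤ z/2) (by linarith : z/2 ≤ d/2) hν0
              have := Real.rpow_nonneg (by linarith : (0:ℝ) ≤ e/2) ν
              linarith
            · have := Real.rpow_le_rpow_of_nonpos (by linarith : (0:ℝ) < e/2)
                (by linarith : e/2 ≤ z/2) hν0.le
              have := Real.rpow_nonneg (by linarith : (0:ℝ) ≤ d/2) ν
              linarith
          have hzp : z^(2*m) ≤ d^(2*m) := pow_le_pow_left₀ hz.le hzd _
          have h1 : (0:ℝ) ≤ z^(2*m) / (2*m).factorial := by positivity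
          have h2 : (0:ℝ) ≤ (z/2)^ν := Real.rpow_nonneg (by linarith) ν
          have h3 : (0:ℝ) < ((2*m).factorial : ℝ) := by positivity
          gcongr

lemma ncChiSqPDF_nonneg {k lam x : ℝ} (hk : 1 < k) (hlam : 0 < lam) (hx : 0 < x) :
    0 ≤ ncChiSqPDF k lam x := by
  have hν : -(1/2 : ℝ) ≤ k/2 - 1 := by linarith
  have hb := besselI_nonneg hν (Real.sqrt_nonneg (lam * x))
  have h1 : (0:ℝ) ≤ (x / lam) ^ (k / 4 - 1 / 2) := Real.rpow_nonneg (by positivity) _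
  unfold ncChiSqPDF
  positivity

lemma ncChiSqPDF_le {k lam₀ lam x : ℝ} (hk : 1 < k) (hlam₀ : 0 < lam₀) (hlam : 0 < lam)
    (hlam2 : lam ≤ 2*lam₀) (hx : 0 < x) :
    ncChiSqPDF k lam x ≤ (Real.exp (4*lam₀) / (2 * Real.Gamma (k/2))) *
      ((x/2)^(k/2-1) * Real.exp (-(3/8)*x)) := by
  set ν : ℝ := k/2 - 1 with hν_def
  have hν : -(1/2 : ℝ) ≤ ν := by rw [hν_def]; linarith
  have hΓ : 0 < Real.Gamma (k/2) := Real.Gamma_pos_of_pos (by linarith)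
  have hlx : 0 < lam * x := by positivity
  set z : ℝ := Real.sqrt (lam * x) with hz_def
  have hz : 0 < z := Real.sqrt_pos.2 hlx
  have hb : besselI ν z ≤ (z/2)^ν / Real.Gamma (k/2) * Real.exp z := by
    have := besselI_le_exp hν hz
    rwa [show ν + 1 = k/2 by rw [hν_def]; ring] at this
  have hpow : (x/lam)^(k/4 - 1/2) * (z/2)^ν = (x/2)^ν := by
    have h1 : (z/2)^ν = (lam*x)^(ν/2) / 2^ν := by
      rw [Real.div_rpow (Real.sqrt_nonneg _) (by norm_num : (0:ℝ) ≤ 2)]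
      congr 1
      rw [Real.sqrt_eq_rpow, ← Real.rpow_mul hlx.le]
      ring_nf
    have h2 : k/4 - 1/2 = ν/2 := by rw [hν_def]; ring
    rw [h1, h2, div_eq_mul_inv ((lam*x)^(ν/2)), ← mul_assoc,
      ← Real.mul_rpow (by positivity) hlx.le,
      show x/lam*(lam*x) = x^2 by field_simp,
      ← Real.rpow_natCast x 2, ← Real.rpow_mul hx.le]
    rw [show ((2:ℕ):ℝ)*(ν/2) = ν by push_cast; ring, ← div_eq_mul_inv, Real.div_rpow hx.le (by norm_num)]
  have hzb : z ≤ 4*lam₀ + x/8 := by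
    have h1 : lam * x ≤ (4*lam₀ + x/8)^2 := by nlinarith [sq_nonneg (4*lam₀ - x/8), mul_le_mul_of_nonneg_right hlam2 hx.le]
    calc z ≤ Real.sqrt ((4*lam₀ + x/8)^2) := Real.sqrt_le_sqrt h1
      _ = 4*lam₀ + x/8 := Real.sqrt_sq (by positivity)
  have hxl : (0:ℝ) ≤ (x/lam)^(k/4 - 1/2) := Real.rpow_nonneg (by positivity) _
  have hz2 : (0:ℝ) ≤ (z/2)^ν := Real.rpow_nonneg (by positivity) _
  have hx2 : (0:ℝ) ≤ (x/2)^ν := Real.rpow_nonneg (by positivity) _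
  calc ncChiSqPDF k lam x
      = (1/2) * Real.exp (-(x+lam)/2) * (x/lam)^(k/4 - 1/2) * besselI ν z := rfl
    _ ≤ (1/2) * Real.exp (-(x+lam)/2) * (x/lam)^(k/4 - 1/2) *
        ((z/2)^ν / Real.Gamma (k/2) * Real.exp z) := by
        apply mul_le_mul_of_nonneg_left hb
        positivity
    _ = (1/(2 * Real.Gamma (k/2))) * ((x/lam)^(k/4 - 1/2) * (z/2)^ν) *
        (Real.exp (-(x+lam)/2) * Real.exp z) := by ring
    _ = (1/(2 * Real.Gamma (k/2))) * (x/2)^ν * Real.exp (-(x+lam)/2 + z) := by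
        rw [hpow, Real.exp_add]
    _ ≤ (1/(2 * Real.Gamma (k/2))) * (x/2)^ν * Real.exp (4*lam₀ + -(3/8)*x) := by
        apply mul_le_mul_of_nonneg_left (Real.exp_le_exp.2 (by linarith))
        positivity
    _ = (Real.exp (4*lam₀) / (2 * Real.Gamma (k/2))) * ((x/2)^ν * Real.exp (-(3/8)*x)) := by
        rw [Real.exp_add]; ring

theorem continuous_integral_ncChiSqPDF_rpow (α k : ℝ)
    (hα : 0 < α) (hk : 1 < k) (hk' : k > 2 - 2 / α) :
    ∀ lam₀ : ℝ, 0 < lam₀ →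
      Tendsto (fun lam => ∫ x in Ioi (0 : ℝ), ncChiSqPDF k lam x ^ α)
        (nhdsWithin lam₀ (Ioi (0 : ℝ)))
        (nhds (∫ x in Ioi (0 : ℝ), ncChiSqPDF k lam₀ x ^ α)) := by
  intro lam₀ hlam₀
  set ν : ℝ := k/2 - 1 with hν_def
  have hν : -(1/2 : ℝ) ≤ ν := by rw [hν_def]; linarith
  have hΓ : 0 < Real.Gamma (k/2) := Real.Gamma_pos_of_pos (by linarith)
  have hs' : -1 < ν * α := by
    have h2 : 0 < α * (k - 2 + 2/α) := mul_pos hα (by linarith)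
    have h3 : α * (2/α) = 2 := by field_simp
    have h4 : 0 < α * (k-2) + 2 := by nlinarith
    rw [hν_def]; nlinarith
  set D : ℝ := Real.exp (4*lam₀) / (2 * Real.Gamma (k/2)) with hD_def
  have hD : 0 ≤ D := by positivity
  apply tendsto_integral_filter_of_dominated_convergence
    (bound := fun x : ℝ => D^α / 2^(ν*α) * (x^(ν*α) * Real.exp (-(3*α/8) * x)))
  · -- measurability
    filter_upwards [self_mem_nhdsWithin] with lam hlam
    have hlam' : 0 < lam := hlam
    apply ContinuousOn.aestronglyMeasurable _ measurableSet_Ioi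
    intro x hx
    have hx' : (0:ℝ) < x := hx
    have hbs : ContinuousWithinAt (fun x : ℝ => besselI ν (Real.sqrt (lam * x))) (Ioi 0) x := by
      have := tendsto_besselI_sqrt hν (c := lam) hlam' hx'
      unfold ContinuousWithinAt
      simp only [mul_comm] at this ⊢
      exact this
    have hc1 : ContinuousWithinAt (fun x : ℝ => (1/2) * Real.exp (-(x+lam)/2)) (Ioi 0) x :=
      (continuous_const.mul (((continuous_id.add continuous_const).neg.div_const 2).rexp)).continuousWithinAt
    have hc2 : ContinuousWithinAt (fun x : ℝ => (x/lam) ^ (k/4 - 1/2)) (Ioi 0) x := by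
      apply ContinuousAt.continuousWithinAt
      exact (continuousAt_id.div_const lam).rpow_const (Or.inl (div_pos hx' hlam').ne')
    exact (((hc1.mul hc2).mul hbs).rpow_const (Or.inr hα.le))
  · -- bound
    filter_upwards [nhdsWithin_le_nhds (Ioo_mem_nhds (by linarith : lam₀/2 < lam₀)
      (by linarith : lam₀ < 2*lam₀))] with lam hlam
    have hlam' : 0 < lam := lt_trans (by linarith) hlam.1
    rw [ae_restrict_iff' measurableSet_Ioi]
    apply ae_of_all
    intro x hx
    have hx' : (0:ℝ) < x := hx
    have h0 : 0 ≤ ncChiSqPDF k lam x := ncChiSqPDF_nonneg hk hlam' hx'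
    rw [Real.norm_eq_abs, abs_of_nonneg (Real.rpow_nonneg h0 α)]
    have hle := ncChiSqPDF_le hk hlam₀ hlam' hlam.2.le hx'
    have hxp : (0:ℝ) ≤ (x/2)^ν := Real.rpow_nonneg (by positivity) _
    calc ncChiSqPDF k lam x ^ α
        ≤ (D * ((x/2)^ν * Real.exp (-(3/8)*x))) ^ α := Real.rpow_le_rpow h0 hle hα.le
      _ = D^α / 2^(ν*α) * (x^(ν*α) * Real.exp (-(3*α/8) * x)) := by
          rw [Real.mul_rpow hD (by positivity), Real.mul_rpow hxp (Real.exp_nonneg _),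
            ← Real.rpow_mul (by positivity : (0:ℝ) ≤ x/2), ← Real.exp_mul,
            Real.div_rpow hx'.le (by norm_num : (0:ℝ) ≤ 2),
            show -(3/8:ℝ)*x*α = -(3*α/8)*x by ring]
          ring
  · -- integrability of bound
    apply Integrable.const_mul
    have := integrableOn_rpow_mul_exp_neg_mul_rpow hs' (by norm_num : (0:ℝ) < 1)
      (by positivity : (0:ℝ) < 3*α/8)
    simpa [Real.rpow_one, IntegrableOn] using this
  · -- pointwise limit
    rw [ae_restrict_iff' measurableSet_Ioi]
    apply ae_of_all
    intro x hx
    have hx' : (0:ℝ) < x := hx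
    have hT : Tendsto (fun lam => ncChiSqPDF k lam x) (nhdsWithin lam₀ (Ioi 0))
        (nhds (ncChiSqPDF k lam₀ x)) := by
      unfold ncChiSqPDF
      apply Tendsto.mul _ (tendsto_besselI_sqrt hν hx' hlam₀)
      apply Tendsto.mul
      · apply Tendsto.mono_left _ nhdsWithin_le_nhds
        exact (continuous_const.mul (((continuous_const.add continuous_id).neg.div_const 2).rexp)).tendsto lam₀
      · apply Tendsto.mono_left _ nhdsWithin_le_nhds
        exact ((Real.continuousAt_rpow_const (x/lam₀) _
          (Or.inl (div_pos hx' hlam₀).ne')).comp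
          (continuousAt_const.div continuousAt_id hlam₀.ne')).tendsto
    exact ((Real.continuousAt_rpow_const _ α (Or.inr hα.le)).tendsto.comp hT)
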